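/- Let (X,V,E) be a compact graph-like space and let C ⊆ X be a subspace homeomorphic to the unit circle S¹. Then C is a standard subspace of X, i.e. every edge of X that meets C is entirely contained in C. -/

import Mathlib

open Set Topology Filter Function

universe u

/-- A compact graph-like space structure on a topological space `X`:
a closed zero-dimensional vertex set `V` together with an index type `E`
(carrying the discrete topology) such that `X \ V ≅ E × (0,1)`. -/
structure GraphLike (X : Type u) [TopologicalSpace X] where
  V : Set X
  closedV : IsClosed V
  zeroDimV : TotallyDisconnectedSpace V
  E : Type
  homeo :
    letI : TopologicalSpace E := ⊥
    Nonempty ((Vᶜ : Set X) ≃ₜ (E × ↥(Set.Ioo (0 : ℝ) 1)))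

variable {X : Type u} [TopologicalSpace X]

/-- An edge of a graph-like space: a connected component of `X \ V`. -/
def GraphLike.IsEdge (G : GraphLike X) (e : Set X) : Prop :=
  ∃ x, x ∈ (G.V)ᶜ ∧ e = connectedComponentIn (G.V)ᶜ x

/-- A subset of the vertex set which is clopen in the subspace `V`. -/
def GraphLike.ClopenIn (G : GraphLike X) (C : Set X) : Prop :=
  C ⊆ G.V ∧ IsClosed C ∧ IsClosed (G.V \ C)

/-- A separation of a graph-like space: a partition of the vertex set into
two disjoint clopen pieces. -/
structure GraphLike.Separation (G : GraphLike X) where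
  A : Set X
  B : Set X
  clopenA : G.ClopenIn A
  clopenB : G.ClopenIn B
  disjoint : A ∩ B = ∅
  union : A ∪ B = G.V

/-- The cut induced by a pair of vertex sets: all edges whose closure meets both. -/
def GraphLike.cut (G : GraphLike X) (A B : Set X) : Set (Set X) :=
  {e | G.IsEdge e ∧ (closure e ∩ A).Nonempty ∧ (closure e ∩ B).Nonempty}

/-- A cut is even if it is finite of even cardinality. -/
def GraphLike.EvenCut (G : GraphLike X) (A B : Set X) : Prop :=
  (G.cut A B).Finite ∧ Even (G.cut A B).ncard

/-- Near every point `z` of the circle, and inside any neighbourhood `N` of `z`,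
there is a preconnected set `A` containing `z` such that `z` is a cut point of `A`. -/
lemma circle_local_cut (z : Circle) {N : Set Circle} (hN : N ∈ 𝓝 z) :
    ∃ A ⊆ N, z ∈ A ∧ IsPreconnected A ∧ ¬ IsPreconnected (A \ {z}) := by
  set f : ℝ → Circle := fun θ => z * Circle.exp θ with hf
  have hfc : Continuous f := continuous_const.mul Circle.exp.continuous
  have hf0 : f 0 = z := by simp [hf]
  have hN0 : f ⁻¹' N ∈ 𝓝 (0 : ℝ) := hfc.continuousAt.preimage_mem_nhds (hf0 ▸ hN)
  obtain ⟨δ, hδpos, hδ⟩ := Metric.mem_nhds_iff.mp hN0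
  set ε : ℝ := min (δ / 2) 1 with hε
  have hεpos : 0 < ε := lt_min (by linarith) one_pos
  have hε1 : ε ≤ 1 := min_le_right _ _
  have hπ : (1 : ℝ) < Real.pi := by have := Real.pi_gt_three; linarith
  have hIcc : Icc (-ε) ε ⊆ f ⁻¹' N := by
    intro θ hθ
    apply hδ
    rw [Metric.mem_ball, Real.dist_eq, sub_zero]
    have h1 : |θ| ≤ ε := abs_le.mpr ⟨hθ.1, hθ.2⟩
    have h2 : ε ≤ δ / 2 := min_le_left _ _
    linarith
  have him : ∀ θ : ℝ, ((f θ * z⁻¹ : Circle) : ℂ).im = Real.sin θ := by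
    intro θ
    have h1 : f θ * z⁻¹ = Circle.exp θ := by
      simp only [hf]
      rw [mul_comm z (Circle.exp θ), mul_assoc, mul_inv_cancel, mul_one]
    rw [h1, Circle.coe_exp, Complex.exp_ofReal_mul_I_im]
  refine ⟨f '' Icc (-ε) ε, by rw [image_subset_iff]; exact hIcc,
    ⟨0, ⟨by linarith, by linarith⟩, hf0⟩,
    isPreconnected_Icc.image f hfc.continuousOn, ?_⟩
  intro hpc
  set u : Set Circle := {w | 0 < ((w * z⁻¹ : Circle) : ℂ).im} with hu
  set v : Set Circle := {w | ((w * z⁻¹ : Circle) : ℂ).im < 0} with hv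
  have hcim : Continuous fun w : Circle => ((w * z⁻¹ : Circle) : ℂ).im :=
    Complex.continuous_im.comp (continuous_subtype_val.comp (continuous_id.mul continuous_const))
  have huo : IsOpen u := isOpen_lt continuous_const hcim
  have hvo : IsOpen v := isOpen_lt hcim continuous_const
  have hzim : ((z * z⁻¹ : Circle) : ℂ).im = 0 := by
    rw [mul_inv_cancel]; simp
  have hsin0 : ∀ θ ∈ Icc (-ε) ε, Real.sin θ = 0 → θ = 0 := by
    intro θ hθ h0
    have h1 : -Real.pi < θ := by have := hθ.1; linarith
    have h2 : θ < Real.pi := by have := hθ.2; linarith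
    exact (Real.sin_eq_zero_iff_of_lt_of_lt h1 h2).mp h0
  have hcover : f '' Icc (-ε) ε \ {z} ⊆ u ∪ v := by
    rintro w ⟨⟨θ, hθ, rfl⟩, hwz⟩
    have hne : Real.sin θ ≠ 0 := by
      intro h0
      exact hwz (by rw [hsin0 θ hθ h0, hf0]; rfl)
    rcases hne.lt_or_gt with hlt | hgt
    · exact Or.inr (by rw [hv, mem_setOf_eq, him]; exact hlt)
    · exact Or.inl (by rw [hu, mem_setOf_eq, him]; exact hgt)
  have hsinε : 0 < Real.sin ε := Real.sin_pos_of_pos_of_lt_pi hεpos (lt_of_le_of_lt hε1 hπ)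
  have hfεu : f ε ∈ u := by rw [hu, mem_setOf_eq, him]; exact hsinε
  have hfεz : f ε ≠ z := by
    intro hh
    have := him ε
    rw [hh, hzim] at this
    linarith
  have hfεv : f (-ε) ∈ v := by
    rw [hv, mem_setOf_eq, him, Real.sin_neg]; linarith
  have hfεz' : f (-ε) ≠ z := by
    intro hh
    have := him (-ε)
    rw [hh, hzim, Real.sin_neg] at this
    linarith
  obtain ⟨w, -, hwu, hwv⟩ := hpc u v huo hvo hcover
    ⟨f ε, ⟨⟨ε, ⟨by linarith, le_refl ε⟩, rfl⟩, hfεz⟩, hfεu⟩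
    ⟨f (-ε), ⟨⟨-ε, ⟨le_refl (-ε), by linarith⟩, rfl⟩, hfεz'⟩, hfεv⟩
  simp only [hu, hv, mem_setOf_eq] at hwu hwv
  linarith

/-- Transport of `circle_local_cut` along a homeomorphism. -/
lemma homeo_circle_local_cut {Y : Type*} [TopologicalSpace Y] (h : Y ≃ₜ Circle)
    (y : Y) {N : Set Y} (hN : N ∈ 𝓝 y) :
    ∃ A ⊆ N, y ∈ A ∧ IsPreconnected A ∧ ¬ IsPreconnected (A \ {y}) := by
  have hN' : h.symm ⁻¹' N ∈ 𝓝 (h y) :=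
    h.symm.continuous.continuousAt.preimage_mem_nhds (by rwa [Homeomorph.symm_apply_apply])
  obtain ⟨A', hA'N, hzA', hA'c, hA'cut⟩ := circle_local_cut (h y) hN'
  refine ⟨h.symm '' A', by rw [image_subset_iff]; exact hA'N,
    ⟨h y, hzA', h.symm_apply_apply y⟩, (h.symm.isPreconnected_image).mpr hA'c, ?_⟩
  intro hpre
  have himg : h.symm '' A' \ {y} = h.symm '' (A' \ {h y}) := by
    rw [image_diff h.symm.injective, image_singleton, h.symm_apply_apply]
  rw [himg] at hpre
  exact hA'cut ((h.symm.isPreconnected_image).mp hpre)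

/-- A topological circle in a compact graph-like space is a standard
subspace: it contains every edge it meets. -/
theorem circle_isStandardSubspace [CompactSpace X] [TopologicalSpace.MetrizableSpace X]
    (G : GraphLike X) {C : Set X} (hC : Nonempty (C ≃ₜ Circle)) :
    ∀ e, G.IsEdge e → (e ∩ C).Nonempty → e ⊆ C := by
  letI : MetricSpace X := TopologicalSpace.metrizableSpaceMetric X
  obtain ⟨h⟩ := hC
  haveI : CompactSpace C := h.symm.compactSpace
  have hCcomp : IsCompact C := isCompact_iff_compactSpace.mpr ‹_›
  have hCclosed : IsClosed C := hCcomp.isClosed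
  letI : TopologicalSpace G.E := ⊥
  haveI : DiscreteTopology G.E := ⟨rfl⟩
  obtain ⟨Φ⟩ := G.homeo
  have hVopen : IsOpen (G.Vᶜ) := G.closedV.isOpen_compl
  haveI : PreconnectedSpace ↥(Ioo (0:ℝ) 1) := Subtype.preconnectedSpace isPreconnected_Ioo
  rintro e ⟨x0, hx0, rfl⟩ ⟨y0, hy0e, hy0C⟩
  set ε := (Φ ⟨x0, hx0⟩).1 with hεdef
  set ehat : Set ↥(G.Vᶜ) := Φ ⁻¹' ({ε} ×ˢ univ) with hehatdef
  have hehatclopen : IsClopen ehat := ((isClopen_discrete {ε}).prod isClopen_univ).preimage Φ.continuous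
  have hx0ehat : (⟨x0, hx0⟩ : ↥(G.Vᶜ)) ∈ ehat := ⟨rfl, trivial⟩
  have hcomp : connectedComponent (⟨x0, hx0⟩ : ↥(G.Vᶜ)) = ehat := by
    apply Set.Subset.antisymm
    · exact hehatclopen.connectedComponent_subset hx0ehat
    · refine IsPreconnected.subset_connectedComponent ?_ hx0ehat
      exact Φ.isPreconnected_preimage.mpr (isPreconnected_singleton.prod isPreconnected_univ)
  have hee : connectedComponentIn G.Vᶜ x0 = Subtype.val '' ehat := by
    rw [connectedComponentIn_eq_image hx0, hcomp]
  rw [hee] at hy0e ⊢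
  set e : Set X := Subtype.val '' ehat with hedef
  have hehatopen : IsOpen ehat := hehatclopen.isOpen
  have heopen : IsOpen e := hVopen.isOpenMap_subtype_val ehat hehatopen
  have hesub : e ⊆ G.Vᶜ := by rintro z ⟨w, -, rfl⟩; exact w.2
  have hfst : ∀ w ∈ ehat, (Φ w).1 = ε := fun w hw => hw.1
  set p : ↥(G.Vᶜ) → ℝ := fun w => ((Φ w).2 : ℝ) with hpdef
  have hpc : Continuous p := continuous_subtype_val.comp (continuous_snd.comp Φ.continuous)
  have hpinj : ∀ w ∈ ehat, ∀ w' ∈ ehat, p w = p w' → w = w' := by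
    intro w hw w' hw' hpp
    apply Φ.injective
    apply Prod.ext
    · rw [hfst w hw, hfst w' hw']
    · exact Subtype.ext hpp
  have hpIoo : ∀ w : ↥(G.Vᶜ), p w ∈ Ioo (0:ℝ) 1 := fun w => (Φ w).2.2
  set ρ : ℝ → X := fun s => if hs : s ∈ Ioo (0:ℝ) 1 then (Φ.symm (ε, ⟨s, hs⟩) : X) else x0
    with hρdef
  have hρp : ∀ w ∈ ehat, ρ (p w) = (w : X) := by
    intro w hw
    have hmem := hpIoo w
    rw [hρdef]
    simp only [dif_pos hmem]
    have heq : ((ε, ⟨p w, hmem⟩) : G.E × ↥(Ioo (0:ℝ) 1)) = Φ w := by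
      apply Prod.ext
      · exact (hfst w hw).symm
      · exact Subtype.ext rfl
    rw [heq, Φ.symm_apply_apply]
  have hρcont : ContinuousOn ρ (Ioo (0:ℝ) 1) := by
    rw [continuousOn_iff_continuous_restrict]
    have hres : (Ioo (0:ℝ) 1).domRestrict ρ = fun s => (Φ.symm (ε, s) : X) := by
      funext s
      simp only [domRestrict_apply, hρdef, dif_pos s.2]
    rw [hres]
    exact continuous_subtype_val.comp
      (Φ.symm.continuous.comp (continuous_const.prodMk continuous_id))
  have key : ∀ x ∈ e ∩ C, ∃ U : Set X, IsOpen U ∧ x ∈ U ∧ U ⊆ e ∩ C := by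
    rintro x ⟨hxe, hxC⟩
    obtain ⟨xhat, hxhatehat, hxhatval⟩ := hxe
    have hxe' : x ∈ e := ⟨xhat, hxhatehat, hxhatval⟩
    have hNe : (Subtype.val ⁻¹' e : Set ↥C) ∈ 𝓝 (⟨x, hxC⟩ : ↥C) :=
      (heopen.preimage continuous_subtype_val).mem_nhds hxe'
    obtain ⟨A, hAN, hxA, hAconn, hAcut⟩ := homeo_circle_local_cut h ⟨x, hxC⟩ hNe
    set Abar : Set X := Subtype.val '' A with hAbardef
    have hAbare : Abar ⊆ e := by rintro z ⟨a, ha, rfl⟩; exact hAN ha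
    have hAbarC : Abar ⊆ C := by rintro z ⟨a, -, rfl⟩; exact a.2
    have hxAbar : x ∈ Abar := ⟨⟨x, hxC⟩, hxA, rfl⟩
    have hAbarconn : IsPreconnected Abar :=
      Topology.IsInducing.subtypeVal.isPreconnected_image.mpr hAconn
    have hAbarcut : ¬ IsPreconnected (Abar \ {x}) := by
      intro hpre
      apply hAcut
      have hdiff : Abar \ {x} = Subtype.val '' (A \ {(⟨x, hxC⟩ : ↥C)}) := by
        rw [hAbardef, image_diff Subtype.val_injective, image_singleton]
      rw [hdiff] at hpre
      exact Topology.IsInducing.subtypeVal.isPreconnected_image.mp hpre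
    set Ahat : Set ↥(G.Vᶜ) := Subtype.val ⁻¹' Abar with hAhatdef
    have hAhatehat : Ahat ⊆ ehat := by
      intro w hw
      obtain ⟨w', hw'ehat, hww'⟩ := hAbare hw
      rwa [← Subtype.val_injective hww']
    have hvalAhat : Subtype.val '' Ahat = Abar :=
      image_preimage_eq_of_subset (by rw [Subtype.range_val]; exact hAbare.trans hesub)
    have hxhatAhat : xhat ∈ Ahat := by
      show (xhat : X) ∈ Abar
      rw [hxhatval]; exact hxAbar
    set T : Set ℝ := p '' Ahat with hTdef
    set t : ℝ := p xhat with htdef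
    have htT : t ∈ T := ⟨xhat, hxhatAhat, rfl⟩
    have hAhatconn : IsPreconnected Ahat := by
      apply Topology.IsInducing.subtypeVal.isPreconnected_image.mp
      rw [hvalAhat]; exact hAbarconn
    have hTconn : IsPreconnected T := hAhatconn.image p hpc.continuousOn
    have hTIoo : T ⊆ Ioo (0:ℝ) 1 := by rintro s ⟨w, -, rfl⟩; exact hpIoo w
    have hρimg : ρ '' (T \ {t}) = Abar \ {x} := by
      apply Set.Subset.antisymm
      · rintro z ⟨s, ⟨hsT, hst⟩, rfl⟩
        obtain ⟨w, hwAhat, rfl⟩ := hsT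
        rw [hρp w (hAhatehat hwAhat)]
        refine ⟨by rw [← hvalAhat]; exact mem_image_of_mem _ hwAhat, ?_⟩
        intro hz
        apply hst
        have hwx : w = xhat := Subtype.val_injective (by rw [hz, ← hxhatval])
        rw [hwx]
        rfl
      · rintro z ⟨hzAbar, hzx⟩
        have hz' : z ∈ Subtype.val '' Ahat := by rw [hvalAhat]; exact hzAbar
        obtain ⟨w, hwAhat, rfl⟩ := hz'
        refine ⟨p w, ⟨⟨w, hwAhat, rfl⟩, ?_⟩, hρp w (hAhatehat hwAhat)⟩
        intro hpt
        apply hzx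
        have hwx : w = xhat := hpinj w (hAhatehat hwAhat) xhat (hAhatehat hxhatAhat) hpt
        rw [hwx, hxhatval]
        rfl
    have hTcut : ¬ IsPreconnected (T \ {t}) := by
      intro hpre
      exact hAbarcut (hρimg ▸ hpre.image ρ (hρcont.mono fun s hs => hTIoo hs.1))
    have hlow : ∃ a ∈ T, a < t := by
      by_contra hcon
      push_neg at hcon
      apply hTcut
      have hTeq : T \ {t} = T ∩ Ioi t := by
        ext s
        constructor
        · rintro ⟨hsT, hst⟩
          exact ⟨hsT, lt_of_le_of_ne (hcon s hsT) (Ne.symm hst)⟩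
        · rintro ⟨hsT, hst⟩
          exact ⟨hsT, fun hh => absurd (mem_singleton_iff.mp hh ▸ hst) (lt_irrefl t)⟩
      rw [hTeq]
      exact (hTconn.ordConnected.inter ordConnected_Ioi).isPreconnected
    have hhigh : ∃ b ∈ T, t < b := by
      by_contra hcon
      push_neg at hcon
      apply hTcut
      have hTeq : T \ {t} = T ∩ Iio t := by
        ext s
        constructor
        · rintro ⟨hsT, hst⟩
          exact ⟨hsT, lt_of_le_of_ne (hcon s hsT) hst⟩
        · rintro ⟨hsT, hst⟩
          exact ⟨hsT, fun hh => absurd (mem_singleton_iff.mp hh ▸ hst) (lt_irrefl t)⟩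
      rw [hTeq]
      exact (hTconn.ordConnected.inter ordConnected_Iio).isPreconnected
    obtain ⟨a, haT, hat⟩ := hlow
    obtain ⟨b, hbT, htb⟩ := hhigh
    have hIccT : Icc a b ⊆ T := hTconn.Icc_subset haT hbT
    refine ⟨Subtype.val '' (Φ ⁻¹' ({ε} ×ˢ (Subtype.val ⁻¹' Ioo a b))), ?_, ?_, ?_⟩
    · exact hVopen.isOpenMap_subtype_val _
        (((isOpen_discrete _).prod (isOpen_Ioo.preimage continuous_subtype_val)).preimage
          Φ.continuous)
    · refine ⟨xhat, ⟨hfst xhat (hAhatehat hxhatAhat), ?_⟩, hxhatval⟩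
      show ((Φ xhat).2 : ℝ) ∈ Ioo a b
      exact ⟨hat, htb⟩
    · rintro z ⟨w, ⟨hwfst, hwsnd⟩, rfl⟩
      have hwehat : w ∈ ehat := ⟨hwfst, trivial⟩
      have hwIoo : p w ∈ Ioo a b := hwsnd
      have hpwT : p w ∈ T := hIccT ⟨le_of_lt hwIoo.1, le_of_lt hwIoo.2⟩
      obtain ⟨w', hw'Ahat, hpw'⟩ := hpwT
      have hww : w' = w := hpinj w' (hAhatehat hw'Ahat) w hwehat hpw'
      rw [← hww]
      have hwAbar : (w' : X) ∈ Abar := by rw [← hvalAhat]; exact mem_image_of_mem _ hw'Ahat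
      exact ⟨hAbare hwAbar, hAbarC hwAbar⟩
  choose U hUopen hUmem hUsub using key
  set O : Set X := ⋃ (x : X) (hx : x ∈ e ∩ C), U x hx with hOdef
  have hOopen : IsOpen O := isOpen_iUnion fun x => isOpen_iUnion fun hx => hUopen x hx
  have hOsub : O ⊆ e ∩ C := iUnion₂_subset hUsub
  have hsubO : e ∩ C ⊆ O := fun x hx => mem_iUnion₂.mpr ⟨x, hx, hUmem x hx⟩
  have heconn : IsPreconnected e := by
    rw [hedef, ← hcomp]
    exact isPreconnected_connectedComponent.image _ continuous_subtype_val.continuousOn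
  intro z hze
  by_contra hzC
  obtain ⟨w, -, hwO, hwC⟩ := heconn O Cᶜ hOopen hCclosed.isOpen_compl
    (fun a ha => (em (a ∈ C)).elim (fun hc => Or.inl (hsubO ⟨ha, hc⟩)) Or.inr)
    ⟨y0, hy0e, hsubO ⟨hy0e, hy0C⟩⟩ ⟨z, hze, hzC⟩
  exact hwC (hOsub hwO).2
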